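/- Let Z be a z×z real matrix and Q a z×z symmetric positive semidefinite real matrix such that the pair (Z, √Q) is controllable, i.e., the matrix [√Q, Z√Q, …, Z^(z−1)√Q] has full row rank z. If λ is a nonzero eigenvalue of Z and P_λ is the spectral projection onto the generalized eigenspace of λ, then for every i ∈ ℕ₀, Z^i P_λ √Q ≠ 0. -/

import Mathlib

/-- The square root of a positive semidefinite matrix, as defined in the older Mathlib
(`Matrix.PosSemidef.sqrt`, removed since). -/
noncomputable def Matrix.PosSemidef.sqrt {n : Type*} [Fintype n] [DecidableEq n]
    {A : Matrix n n ℝ} (hA : A.PosSemidef) : Matrix n n ℝ :=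
  hA.1.eigenvectorUnitary.1 * Matrix.diagonal ((↑) ∘ (fun x : ℝ => Real.sqrt x) ∘ hA.1.eigenvalues) *
    (star hA.1.eigenvectorUnitary : Matrix n n ℝ)

lemma rank_right_inverse {m : ℕ} {n : Type*} [Fintype n] (A : Matrix (Fin m) n ℝ)
    (h : A.rank = m) : ∃ D : Matrix n (Fin m) ℝ, A * D = 1 := by
  classical
  have hsurj : Function.Surjective A.mulVecLin := by
    rw [← LinearMap.range_eq_top]
    apply Submodule.eq_top_of_finrank_eq
    rw [← Matrix.rank, h, Module.finrank_fin_fun]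
  choose g hg using hsurj
  refine ⟨Matrix.of (fun p k => g (Pi.single k 1) p), ?_⟩
  ext j k
  have h1 : A.mulVec (g (Pi.single k 1)) j = (Pi.single k (1:ℝ) : Fin m → ℝ) j := by
    rw [← Matrix.mulVecLin_apply, hg]
  simp only [Matrix.mul_apply, Matrix.of_apply, Matrix.one_apply]
  simpa [Matrix.mulVec, dotProduct, Pi.single_apply, eq_comm] using h1

lemma unit_aux {A : Type*} [Ring A] [Algebra ℂ A] (a b : ℂ) (P : A) (hP : P * P = P) :
    (1 + a • P) * (1 + b • P) = 1 + (a + b + a * b) • P := by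
  simp only [mul_add, add_mul, one_mul, mul_one, smul_mul_assoc, mul_smul_comm,
    smul_smul, hP, add_smul, smul_add, mul_comm b a]
  abel

theorem stmt_2 {z : ℕ} (Z Q : Matrix (Fin z) (Fin z) ℝ) (hQ : Q.PosSemidef)
    (hctrb : (Matrix.of fun (j : Fin z) (p : Fin z × Fin z) =>
        (Z ^ (p.1 : ℕ) * hQ.sqrt) j p.2).rank = z)
    (lam : ℂ) (hlam : lam ∈ spectrum ℂ (Z.map Complex.ofReal)) (hlam0 : lam ≠ 0)
    (P : Matrix (Fin z) (Fin z) ℂ)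
    (hPproj : P * P = P)
    (hPcomm : Z.map Complex.ofReal * P = P * Z.map Complex.ofReal)
    (hPrange : (Z.map Complex.ofReal - lam • 1) ^ z * P = 0)
    (hPfix : ∀ v : Fin z → ℂ,
      ((Z.map Complex.ofReal - lam • 1) ^ z).mulVec v = 0 → P.mulVec v = v) :
    ∀ i : ℕ, (Z.map Complex.ofReal) ^ i * P * hQ.sqrt.map Complex.ofReal ≠ 0 := by
  classical
  intro i hzero
  set M : Matrix (Fin z) (Fin z) ℂ := Z.map Complex.ofReal with hMdef
  set S : Matrix (Fin z) (Fin z) ℝ := hQ.sqrt with hSdef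
  set Sc : Matrix (Fin z) (Fin z) ℂ := S.map Complex.ofReal with hScdef
  -- there is an eigenvector v ≠ 0
  have hns : ¬ IsUnit (algebraMap ℂ (Matrix (Fin z) (Fin z) ℂ) lam - M) :=
    spectrum.mem_iff.mp hlam
  have hdet : (algebraMap ℂ (Matrix (Fin z) (Fin z) ℂ) lam - M).det = 0 := by
    by_contra h
    exact hns ((Matrix.isUnit_iff_isUnit_det _).mpr (isUnit_iff_ne_zero.mpr h))
  obtain ⟨v, hv0, hv⟩ := (Matrix.exists_mulVec_eq_zero_iff).mpr hdet
  have halg : algebraMap ℂ (Matrix (Fin z) (Fin z) ℂ) lam = lam • 1 :=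
    Algebra.algebraMap_eq_smul_one lam
  have hvM : (M - lam • 1).mulVec v = 0 := by
    have h2 : (M - lam • 1) = -(algebraMap ℂ (Matrix (Fin z) (Fin z) ℂ) lam - M) := by
      rw [halg]; abel
    rw [h2, Matrix.neg_mulVec, hv, neg_zero]
  -- z ≥ 1
  obtain ⟨j0, hj0⟩ := Function.ne_iff.mp hv0
  have hz : 0 < z := j0.pos
  have hzz : z - 1 + 1 = z := Nat.succ_pred_eq_of_pos hz
  -- v is killed by (M - lam)^z
  have hsplit : (M - lam • 1) ^ z = (M - lam • 1) ^ (z - 1) * (M - lam • 1) := by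
    rw [← pow_succ, hzz]
  have hvpow : ((M - lam • 1) ^ z).mulVec v = 0 := by
    rw [hsplit, ← Matrix.mulVec_mulVec, hvM, Matrix.mulVec_zero]
  have hPv : P.mulVec v = v := hPfix v hvpow
  have hPne : P ≠ 0 := by
    intro h
    rw [h, Matrix.zero_mulVec] at hPv
    exact hv0 hPv.symm
  -- commutation facts
  have cMP : Commute M P := hPcomm
  have cAP : Commute (M - lam • 1) P :=
    (cMP.sub_left (((Commute.one_left P).smul_left lam)))
  set N : Matrix (Fin z) (Fin z) ℂ := (M - lam • 1) * P with hNdef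
  have hPz : P ^ z = P := by
    have h1 : P ^ z = P ^ (z - 1 + 1) := by rw [hzz]
    rw [h1]; exact (show IsIdempotentElem P from hPproj).pow_succ_eq _
  have hNnil : IsNilpotent N := by
    refine ⟨z, ?_⟩
    rw [hNdef, cAP.mul_pow, hPz, hPrange]
  have cNP : Commute N P := (cAP.mul_left (Commute.refl P))
  -- the unit u
  set u : Matrix (Fin z) (Fin z) ℂ := 1 + (lam - 1) • P with hudef
  have hc1 : (lam - 1) + (lam⁻¹ - 1) + (lam - 1) * (lam⁻¹ - 1) = 0 := by
    field_simp; ring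
  have hc2 : (lam⁻¹ - 1) + (lam - 1) + (lam⁻¹ - 1) * (lam - 1) = 0 := by
    field_simp; ring
  have humul : u * (1 + (lam⁻¹ - 1) • P) = 1 := by
    rw [hudef, unit_aux _ _ _ hPproj, hc1, zero_smul, add_zero]
  have hmulu : (1 + (lam⁻¹ - 1) • P) * u = 1 := by
    rw [hudef, unit_aux _ _ _ hPproj, hc2, zero_smul, add_zero]
  have huunit : IsUnit u := ⟨⟨u, 1 + (lam⁻¹ - 1) • P, humul, hmulu⟩, rfl⟩
  -- T = M*P + (1 - P) is a unit
  set T : Matrix (Fin z) (Fin z) ℂ := M * P + (1 - P) with hTdef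
  have hTeq : T = u + N := by
    rw [hTdef, hudef, hNdef, sub_mul, smul_mul_assoc, one_mul, sub_smul, one_smul]
    abel
  have cNu : Commute N u :=
    (Commute.one_right N).add_right (cNP.smul_right (lam - 1))
  have hTunit : IsUnit T := by
    rw [hTeq]; exact hNnil.isUnit_add_left_of_commute huunit cNu
  have hTP : T * P = M * P := by
    rw [hTdef, add_mul, sub_mul, one_mul, mul_assoc, hPproj]
    abel
  have cTM : Commute T M := by
    rw [hTdef]
    exact (((Commute.refl M).mul_left cMP.symm).add_left
      ((Commute.one_left M).sub_left cMP.symm))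
  -- T^i * P = M^i * P
  have hpow : ∀ k : ℕ, T ^ k * P = M ^ k * P := by
    intro k
    induction k with
    | zero => simp
    | succ n ih =>
      rw [pow_succ, pow_succ, mul_assoc, hTP, ← mul_assoc, (cTM.pow_left n).eq,
        mul_assoc, ih, ← mul_assoc, ← pow_succ', ← pow_succ]
  -- P * Sc = 0
  have hPSc : P * Sc = 0 := by
    obtain ⟨W, hW⟩ := hTunit.pow i
    have h1 : T ^ i * (P * Sc) = 0 := by
      rw [← mul_assoc, hpow, hzero]
    calc P * Sc = (↑W⁻¹ * T ^ i) * (P * Sc) := by rw [← hW, Units.inv_mul, one_mul]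
    _ = ↑W⁻¹ * (T ^ i * (P * Sc)) := by rw [mul_assoc]
    _ = 0 := by rw [h1, mul_zero]
  -- P kills all M^k * Sc
  have hPkill : ∀ k : ℕ, P * (M ^ k * Sc) = 0 := by
    intro k
    rw [← mul_assoc, ← (cMP.pow_left k).eq, mul_assoc, hPSc, mul_zero]
  -- controllability matrix
  set C : Matrix (Fin z) (Fin z × Fin z) ℝ :=
    Matrix.of (fun (j : Fin z) (p : Fin z × Fin z) => (Z ^ (p.1 : ℕ) * S) j p.2) with hCdef
  obtain ⟨D, hD⟩ := rank_right_inverse C hctrb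
  have hmapC : (C.map Complex.ofReal) * (D.map Complex.ofReal) = 1 := by
    have := congrArg (Matrix.map · (Complex.ofRealHom : ℝ →+* ℂ)) hD
    simp [Matrix.map_mul, Matrix.map_one] at this
    exact this
  have hPC : P * (C.map Complex.ofReal) = 0 := by
    ext j p
    have hcol : ∀ k, (C.map Complex.ofReal) k p = (M ^ (p.1 : ℕ) * Sc) k p.2 := by
      intro k
      have : (M ^ (p.1 : ℕ) * Sc) = ((Complex.ofRealHom : ℝ →+* ℂ).mapMatrix (Z ^ (p.1 : ℕ) * S)) := by
        rw [map_mul, map_pow]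
        rfl
      rw [this]
      rfl
    rw [Matrix.mul_apply]
    simp only [hcol]
    rw [Matrix.zero_apply, ← Matrix.mul_apply, hPkill]
    rfl
  have hP0 : P = 0 := by
    calc P = P * ((C.map Complex.ofReal) * (D.map Complex.ofReal)) := by
            rw [hmapC, mul_one]
    _ = (P * (C.map Complex.ofReal)) * (D.map Complex.ofReal) := by
            rw [Matrix.mul_assoc]
    _ = 0 := by rw [hPC, Matrix.zero_mul]
  exact hPne hP0
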